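/- Let C = {h : Z_2^γ̇ × Z_4^δ → Z_2 | h = φ⁺ ∘ f for some affine f : Z_2^γ̇ × Z_4^δ → Z_4 with f(0) ∈ {0,2}}, viewed as a binary code of length n = 2^{γ̇+2δ}. Then |C| = 2n and the minimum Hamming distance of C is n/2. -/

import Mathlib

def IsAffine {G : Type*} [AddCommGroup G] (f : G → ZMod 4) : Prop :=
  ∀ x y : G, f 0 - f x - f y + f (x + y) = 0
def phiPlus (a : ZMod 4) : ZMod 2 := if a = 1 ∨ a = 2 then 1 else 0

def chi (t : ZMod 2) : ZMod 4 := 2 * t.val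

def Ffun {γ δ : ℕ} (p : ZMod 2 × (Fin γ → ZMod 2) × (Fin δ → ZMod 4)) :
    (Fin γ → ZMod 2) × (Fin δ → ZMod 4) → ZMod 4 :=
  fun v => chi p.1 + (∑ i, chi (p.2.1 i * v.1 i)) + (∑ j, p.2.2 j * v.2 j)

lemma chi_zero : chi 0 = 0 := by decide

lemma Ffun_zero {γ δ : ℕ} (p : ZMod 2 × (Fin γ → ZMod 2) × (Fin δ → ZMod 4)) :
    Ffun p 0 = chi p.1 := by
  have hz : ∀ a : ZMod 2, chi (a * 0) = 0 := by decide
  simp [Ffun, hz, chi_zero]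

lemma Ffun_affine {γ δ : ℕ} (p : ZMod 2 × (Fin γ → ZMod 2) × (Fin δ → ZMod 4)) :
    IsAffine (Ffun p) := by
  intro u v
  have key : ∀ s t : ZMod 2, chi (s + t) = chi s + chi t := by decide
  simp only [Ffun, Prod.fst_add, Prod.snd_add, Pi.add_apply, Prod.fst_zero, Prod.snd_zero,
    Pi.zero_apply, mul_add, mul_zero, key, chi_zero, Finset.sum_add_distrib,
    Finset.sum_const_zero]
  ring

lemma Ffun_single1 {γ δ : ℕ} (p : ZMod 2 × (Fin γ → ZMod 2) × (Fin δ → ZMod 4)) (i : Fin γ) :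
    Ffun p (Pi.single i 1, 0) = chi p.1 + chi (p.2.1 i) := by
  have hz : ∀ a : ZMod 2, chi (a * 0) = 0 := by decide
  simp [Ffun, Pi.single_apply, mul_ite, mul_one, mul_zero, apply_ite chi, chi_zero,
    Finset.sum_ite_eq', hz]

lemma Ffun_single2 {γ δ : ℕ} (p : ZMod 2 × (Fin γ → ZMod 2) × (Fin δ → ZMod 4)) (j : Fin δ)
    (t : ZMod 4) : Ffun p (0, Pi.single j t) = chi p.1 + p.2.2 j * t := by
  have hz : ∀ a : ZMod 2, chi (a * 0) = 0 := by decide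
  simp [Ffun, Pi.single_apply, mul_ite, mul_zero, hz, Finset.sum_ite_eq', chi_zero]

lemma Ffun_inj {γ δ : ℕ} : Function.Injective
    (fun p : ZMod 2 × (Fin γ → ZMod 2) × (Fin δ → ZMod 4) => phiPlus ∘ Ffun p) := by
  intro p q h
  have heps : ∀ ε ε' : ZMod 2, phiPlus (chi ε) = phiPlus (chi ε') → ε = ε' := by decide
  have ha : ∀ (ε s t : ZMod 2),
      phiPlus (chi ε + chi s) = phiPlus (chi ε + chi t) → s = t := by decide
  have hb : ∀ (ε : ZMod 2) (s t : ZMod 4), phiPlus (chi ε + s * 1) = phiPlus (chi ε + t * 1) →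
      phiPlus (chi ε + s * 2) = phiPlus (chi ε + t * 2) → s = t := by decide
  have h0 := congrFun h 0
  simp only [Function.comp_apply, Ffun_zero] at h0
  have hε : p.1 = q.1 := heps _ _ h0
  obtain ⟨ε, a, b⟩ := p
  obtain ⟨ε', a', b'⟩ := q
  simp only at hε
  subst hε
  refine Prod.ext rfl (Prod.ext (funext fun i => ?_) (funext fun j => ?_))
  · have h1 := congrFun h (Pi.single i 1, 0)
    simp only [Function.comp_apply, Ffun_single1] at h1
    exact ha _ _ _ h1
  · have h1 := congrFun h ((0 : Fin γ → ZMod 2), Pi.single j 1)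
    have h2 := congrFun h ((0 : Fin γ → ZMod 2), Pi.single j 2)
    simp only [Function.comp_apply, Ffun_single2] at h1 h2
    exact hb _ _ _ h1 h2

lemma Ffun_surj {γ δ : ℕ} (f : (Fin γ → ZMod 2) × (Fin δ → ZMod 4) → ZMod 4)
    (hf : IsAffine f) (hf0 : f 0 = 0 ∨ f 0 = 2) :
    ∃ p : ZMod 2 × (Fin γ → ZMod 2) × (Fin δ → ZMod 4), Ffun p = f := by
  have fadd : ∀ u v, f (u + v) = f u + f v - f 0 := fun u v => by linear_combination (hf u v)
  set A : ((Fin γ → ZMod 2) × (Fin δ → ZMod 4)) →+ ZMod 4 :=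
    { toFun := fun v => f v - f 0
      map_zero' := sub_self _
      map_add' := fun u v => by show f (u + v) - f 0 = (f u - f 0) + (f v - f 0); rw [fadd]; ring } with hA
  have hAv : ∀ v, A v = f v - f 0 := fun v => rfl
  refine ⟨⟨if f 0 = 2 then 1 else 0,
           fun i => if A (Pi.single i 1, 0) = 2 then 1 else 0,
           fun j => A (0, Pi.single j 1)⟩, ?_⟩
  funext v
  obtain ⟨x, y⟩ := v
  have hchie : chi (if f 0 = 2 then 1 else 0) = f 0 := by
    rcases hf0 with h | h <;> rw [h] <;> decide
  have hsplit : A (x, y) = A (x, 0) + A (0, y) := by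
    rw [← map_add]
    congr 1
    simp [Prod.mk_add_mk]
  have hx : A (x, (0 : Fin δ → ZMod 4))
      = ∑ i, chi ((if A (Pi.single i 1, 0) = 2 then 1 else 0) * x i) := by
    have hxd : x = ∑ i, Pi.single i (x i) := (Finset.univ_sum_single x).symm
    have : A (x, 0) = ∑ i, A (Pi.single i (x i), 0) := by
      conv_lhs => rw [hxd]
      rw [show ((∑ i, Pi.single i (x i) : Fin γ → ZMod 2), (0 : Fin δ → ZMod 4))
            = ∑ i, ((Pi.single i (x i) : Fin γ → ZMod 2), (0 : Fin δ → ZMod 4)) by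
          rw [Prod.ext_iff]; simp [Prod.fst_sum, Prod.snd_sum]]
      exact map_sum A _ _
    rw [this]
    refine Finset.sum_congr rfl fun i _ => ?_
    have hti2 : ∀ t : ZMod 2, t = 0 ∨ t = 1 := by decide
    have hti := hti2 (x i)
    have hc : A (Pi.single i 1, 0) + A (Pi.single i 1, 0) = 0 := by
      rw [← map_add]
      rw [show ((Pi.single i 1 : Fin γ → ZMod 2), (0 : Fin δ → ZMod 4))
            + ((Pi.single i 1 : Fin γ → ZMod 2), (0 : Fin δ → ZMod 4))
            = ((Pi.single i (1+1) : Fin γ → ZMod 2), (0 : Fin δ → ZMod 4)) by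
          rw [Pi.single_add]; rw [Prod.ext_iff]; simp]
      rw [show (1 + 1 : ZMod 2) = 0 by decide, Pi.single_zero]
      exact map_zero A
    have hc02 : A (Pi.single i 1, 0) = 0 ∨ A (Pi.single i 1, 0) = 2 := by
      revert hc; generalize A (Pi.single i 1, 0) = c; revert c; decide
    rcases hti with h | h
    · rw [h, mul_zero, chi_zero, Pi.single_zero]
      rw [show ((0 : Fin γ → ZMod 2), (0 : Fin δ → ZMod 4))
            = (0 : (Fin γ → ZMod 2) × (Fin δ → ZMod 4)) from rfl]
      exact map_zero A
    · rw [h, mul_one]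
      rcases hc02 with h' | h'
      · rw [h', if_neg (by decide : (0 : ZMod 4) ≠ 2), chi_zero]
      · rw [h', if_pos rfl]
        decide
  have hy : A ((0 : Fin γ → ZMod 2), y) = ∑ j, A (0, Pi.single j 1) * y j := by
    have hyd : y = ∑ j, Pi.single j (y j) := (Finset.univ_sum_single y).symm
    have : A (0, y) = ∑ j, A (0, Pi.single j (y j)) := by
      conv_lhs => rw [hyd]
      rw [show ((0 : Fin γ → ZMod 2), (∑ j, Pi.single j (y j) : Fin δ → ZMod 4))
            = ∑ j, ((0 : Fin γ → ZMod 2), (Pi.single j (y j) : Fin δ → ZMod 4)) by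
          rw [Prod.ext_iff]; simp [Prod.fst_sum, Prod.snd_sum]]
      exact map_sum A _ _
    rw [this]
    refine Finset.sum_congr rfl fun j _ => ?_
    have htj2 : ∀ t : ZMod 4, t = 0 ∨ t = 1 ∨ t = 2 ∨ t = 3 := by decide
    have htj := htj2 (y j)
    have hsadd : ∀ s t : ZMod 4, A ((0 : Fin γ → ZMod 2), Pi.single j (s + t))
        = A (0, Pi.single j s) + A (0, Pi.single j t) := by
      intro s t
      rw [← map_add]
      congr 1
      rw [Prod.ext_iff]
      simp [Pi.single_add]
    rcases htj with h | h | h | h <;> rw [h]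
    · rw [Pi.single_zero, mul_zero]
      rw [show ((0 : Fin γ → ZMod 2), (0 : Fin δ → ZMod 4))
            = (0 : (Fin γ → ZMod 2) × (Fin δ → ZMod 4)) from rfl]
      exact map_zero A
    · rw [mul_one]
    · rw [show (2 : ZMod 4) = 1 + 1 by decide, hsadd]; ring
    · rw [show (3 : ZMod 4) = 1 + (1 + 1) by decide, hsadd, hsadd]; ring
  have final : f (x, y) = f 0 + (A (x, 0) + A (0, y)) := by
    rw [← hsplit, hAv]; ring
  simp only [Ffun]
  rw [hchie, ← hx, ← hy, final]
  ring

lemma pair_sum {γ δ : ℕ} (h₁ h₂ : (Fin γ → ZMod 2) × (Fin δ → ZMod 4) → ZMod 2)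
    (w : (Fin γ → ZMod 2) × (Fin δ → ZMod 4))
    (hw : ∀ v, (h₁ (v + w) ≠ h₂ (v + w) ↔ h₁ v = h₂ v)) :
    2 * ∑ v : (Fin γ → ZMod 2) × (Fin δ → ZMod 4), (if h₁ v ≠ h₂ v then 1 else 0)
      = 2 ^ (γ + 2 * δ) := by
  have hcard : Fintype.card ((Fin γ → ZMod 2) × (Fin δ → ZMod 4)) = 2 ^ (γ + 2*δ) := by
    simp [Fintype.card_prod, Fintype.card_fun, pow_add, pow_mul]
  have hre : ∑ v : (Fin γ → ZMod 2) × (Fin δ → ZMod 4), (if h₁ v ≠ h₂ v then (1:ℕ) else 0)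
      = ∑ v : (Fin γ → ZMod 2) × (Fin δ → ZMod 4), (if h₁ (v+w) ≠ h₂ (v+w) then (1:ℕ) else 0) :=
    (Fintype.sum_equiv (Equiv.addRight w) _ _ (fun v => rfl)).symm
  have key : ∀ v : (Fin γ → ZMod 2) × (Fin δ → ZMod 4),
      (if h₁ v ≠ h₂ v then (1:ℕ) else 0) + (if h₁ (v+w) ≠ h₂ (v+w) then 1 else 0) = 1 := by
    intro v
    by_cases h : h₁ v = h₂ v
    · simp [h, (hw v).mpr h]
    · have := (hw v).not.mpr (by simpa using h)
      simp at this
      simp [h, this]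
  calc 2 * ∑ v : (Fin γ → ZMod 2) × (Fin δ → ZMod 4), (if h₁ v ≠ h₂ v then (1:ℕ) else 0)
      = ∑ v : (Fin γ → ZMod 2) × (Fin δ → ZMod 4), ((if h₁ v ≠ h₂ v then (1:ℕ) else 0)
          + (if h₁ (v+w) ≠ h₂ (v+w) then 1 else 0)) := by
        rw [Finset.sum_add_distrib, ← hre]; ring
    _ = 2 ^ (γ + 2*δ) := by
        simp only [key]
        simp [hcard]

lemma dist_bound {γ δ : ℕ} (h₁ h₂ : (Fin γ → ZMod 2) × (Fin δ → ZMod 4) → ZMod 2)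
    (H₁ : ∃ f, IsAffine f ∧ f 0 ∈ ({0, 2} : Set (ZMod 4)) ∧ h₁ = phiPlus ∘ f)
    (H₂ : ∃ f, IsAffine f ∧ f 0 ∈ ({0, 2} : Set (ZMod 4)) ∧ h₂ = phiPlus ∘ f)
    (hne : h₁ ≠ h₂) :
    (2 * ∑ v : (Fin γ → ZMod 2) × (Fin δ → ZMod 4), (if h₁ v ≠ h₂ v then 1 else 0)
      = 2 ^ (γ + 2 * δ))
    ∨ (∀ v, h₁ v ≠ h₂ v) := by
  obtain ⟨f, hf, hf0, rfl⟩ := H₁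
  obtain ⟨g, hg, hg0, rfl⟩ := H₂
  simp only [Set.mem_insert_iff, Set.mem_singleton_iff] at hf0 hg0
  have fadd : ∀ u v, f (u + v) = f u + f v - f 0 := by
    intro u v; linear_combination (hf u v)
  have gadd : ∀ u v, g (u + v) = g u + g v - g 0 := by
    intro u v; linear_combination (hg u v)
  set E : (Fin γ → ZMod 2) × (Fin δ → ZMod 4) → ZMod 4 :=
    fun v => (f v - f 0) - (g v - g 0) with hE
  have L1 : ∀ a b α β : ZMod 4, (a - b = 0 ∨ a - b = 2) → β = α + 2 →
      ((phiPlus (a+α) ≠ phiPlus (b+β)) ↔ phiPlus a = phiPlus b) := by decide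
  have L2 : ∀ a b α β : ZMod 4, (α = 0 ∨ α = 2) → β = α + 2 →
      ((phiPlus (a+α) ≠ phiPlus (b+β)) ↔ phiPlus a = phiPlus b) := by decide
  have Ltwo : ∀ x : ZMod 4, 2 * x = 0 ∨ 2 * x = 2 := by decide
  have Lodd2 : ∀ x : ZMod 4, (x = 1 ∨ x = 3) → 2 * x = 2 := by decide
  have Lnotodd : ∀ x : ZMod 4, x ≠ 1 → x ≠ 3 → x = 0 ∨ x = 2 := by decide
  have Lsub2 : ∀ x : ZMod 4, x - 2 = x + 2 := by decide
  have Ladd02 : ∀ x y : ZMod 4, (x = 0 ∨ x = 2) → (y = 0 ∨ y = 2) → (x + y = 0 ∨ x + y = 2) := by decide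
  have Lzero : ∀ x : ZMod 4, x ≠ 1 → x ≠ 3 → x ≠ 2 → x = 0 := by decide
  have Lflip : ∀ x : ZMod 4, phiPlus (x + 2) ≠ phiPlus x := by decide
  by_cases c1 : ∃ w, E w = 1 ∨ E w = 3
  · obtain ⟨w, hw⟩ := c1
    left
    apply pair_sum _ _ (w + w)
    intro v
    simp only [Function.comp_apply]
    have e1 : f (v + (w + w)) = f v + (f (w+w) - f 0) := by rw [fadd]; ring
    have e2 : g (v + (w + w)) = g v + (g (w+w) - g 0) := by rw [gadd]; ring
    rw [e1, e2]
    apply L2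
    · have : f (w+w) - f 0 = 2 * (f w - f 0) := by rw [fadd]; ring
      rw [this]
      exact Ltwo _
    · have h2 : g (w+w) - g 0 = (f (w+w) - f 0) - 2 * E w := by
        rw [fadd, gadd, hE]; ring
      rw [h2, Lodd2 _ hw, Lsub2]
  · by_cases c2 : ∃ w, E w = 2
    · obtain ⟨w, hw⟩ := c2
      left
      push_neg at c1
      have hEall : ∀ v, E v = 0 ∨ E v = 2 := by
        intro v
        exact Lnotodd _ (c1 v).1 (c1 v).2
      apply pair_sum _ _ w
      intro v
      simp only [Function.comp_apply]
      have e1 : f (v + w) = f v + (f w - f 0) := by rw [fadd]; ring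
      have e2 : g (v + w) = g v + (g w - g 0) := by rw [gadd]; ring
      rw [e1, e2]
      apply L1
      · have : f v - g v = (f 0 - g 0) + E v := by rw [hE]; ring
        rw [this]
        have h0 : f 0 - g 0 = 0 ∨ f 0 - g 0 = 2 := by
          rcases hf0 with h | h <;> rcases hg0 with h' | h' <;> rw [h, h'] <;> decide
        exact Ladd02 _ _ h0 (hEall v)
      · have : g w - g 0 = (f w - f 0) - E w := by rw [hE]; ring
        rw [this, hw, Lsub2]
    · -- E ≡ 0
      push_neg at c1 c2
      have hEall : ∀ v, E v = 0 := by
        intro v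
        exact Lzero _ (c1 v).1 (c1 v).2 (c2 v)
      have hfg : ∀ v, f v = g v + (f 0 - g 0) := by
        intro v
        have := hEall v
        rw [hE] at this
        linear_combination this
      have h0 : f 0 - g 0 = 0 ∨ f 0 - g 0 = 2 := by
        rcases hf0 with h | h <;> rcases hg0 with h' | h' <;> rw [h, h'] <;> decide
      rcases h0 with h | h
      · exfalso
        apply hne
        funext v
        simp only [Function.comp_apply]
        rw [hfg v, h, add_zero]
      · right
        intro v
        simp only [Function.comp_apply]
        rw [hfg v, h]
        exact Lflip _

lemma card_code (γ δ : ℕ) :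
    Nat.card {h : (Fin γ → ZMod 2) × (Fin δ → ZMod 4) → ZMod 2 //
        ∃ f, IsAffine f ∧ f 0 ∈ ({0, 2} : Set (ZMod 4)) ∧ h = phiPlus ∘ f}
      = 2 * 2 ^ (γ + 2 * δ) := by
  have hchi02 : ∀ ε : ZMod 2, chi ε = 0 ∨ chi ε = 2 := by decide
  have hbij : Function.Bijective (fun p : ZMod 2 × (Fin γ → ZMod 2) × (Fin δ → ZMod 4) =>
      (⟨phiPlus ∘ Ffun p, Ffun p, Ffun_affine p, by
          simp only [Set.mem_insert_iff, Set.mem_singleton_iff, Ffun_zero]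
          exact hchi02 p.1, rfl⟩ :
        {h : (Fin γ → ZMod 2) × (Fin δ → ZMod 4) → ZMod 2 //
          ∃ f, IsAffine f ∧ f 0 ∈ ({0, 2} : Set (ZMod 4)) ∧ h = phiPlus ∘ f})) := by
    constructor
    · intro p q h
      exact Ffun_inj (congrArg Subtype.val h)
    · rintro ⟨h, f, hf, hf0, rfl⟩
      simp only [Set.mem_insert_iff, Set.mem_singleton_iff] at hf0
      obtain ⟨p, hp⟩ := Ffun_surj f hf hf0
      exact ⟨p, Subtype.ext (by show phiPlus ∘ Ffun p = phiPlus ∘ f; rw [hp])⟩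
  rw [← Nat.card_eq_of_bijective _ hbij]
  simp [Nat.card_eq_fintype_card, Fintype.card_fun, pow_add, pow_mul]

theorem stmt14 (γ δ : ℕ) :
    Nat.card {h : (Fin γ → ZMod 2) × (Fin δ → ZMod 4) → ZMod 2 //
        ∃ f, IsAffine f ∧ f 0 ∈ ({0, 2} : Set (ZMod 4)) ∧ h = phiPlus ∘ f}
      = 2 * 2 ^ (γ + 2 * δ) ∧
    (∀ h₁ h₂ : (Fin γ → ZMod 2) × (Fin δ → ZMod 4) → ZMod 2,
      (∃ f, IsAffine f ∧ f 0 ∈ ({0, 2} : Set (ZMod 4)) ∧ h₁ = phiPlus ∘ f) →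
      (∃ f, IsAffine f ∧ f 0 ∈ ({0, 2} : Set (ZMod 4)) ∧ h₂ = phiPlus ∘ f) →
      h₁ ≠ h₂ →
      2 ^ (γ + 2 * δ) ≤
        2 * ∑ v : (Fin γ → ZMod 2) × (Fin δ → ZMod 4), (if h₁ v ≠ h₂ v then 1 else 0)) ∧
    (0 < γ + δ →
      ∃ h₁ h₂ : (Fin γ → ZMod 2) × (Fin δ → ZMod 4) → ZMod 2,
        (∃ f, IsAffine f ∧ f 0 ∈ ({0, 2} : Set (ZMod 4)) ∧ h₁ = phiPlus ∘ f) ∧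
        (∃ f, IsAffine f ∧ f 0 ∈ ({0, 2} : Set (ZMod 4)) ∧ h₂ = phiPlus ∘ f) ∧
        h₁ ≠ h₂ ∧
        2 ^ (γ + 2 * δ) =
          2 * ∑ v : (Fin γ → ZMod 2) × (Fin δ → ZMod 4), (if h₁ v ≠ h₂ v then 1 else 0)) := by
  refine ⟨card_code γ δ, ?_, ?_⟩
  · intro h₁ h₂ H₁ H₂ hne
    rcases dist_bound h₁ h₂ H₁ H₂ hne with h | h
    · exact h.ge
    · have : ∀ v : (Fin γ → ZMod 2) × (Fin δ → ZMod 4),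
          (if h₁ v ≠ h₂ v then (1:ℕ) else 0) = 1 := fun v => if_pos (h v)
      simp only [this, Finset.sum_const, Finset.card_univ, smul_eq_mul, mul_one]
      have hcard : Fintype.card ((Fin γ → ZMod 2) × (Fin δ → ZMod 4)) = 2 ^ (γ + 2*δ) := by
        simp [Fintype.card_fun, pow_add, pow_mul]
      rw [hcard]
      omega
  · intro hpos
    rcases Nat.eq_zero_or_pos γ with hγ | hγ
    · -- δ > 0
      have hδ : 0 < δ := by omega
      set j₀ : Fin δ := ⟨0, hδ⟩
      set f₁ : (Fin γ → ZMod 2) × (Fin δ → ZMod 4) → ZMod 4 := fun v => 2 * v.2 j₀ with hf₁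
      set f₂ : (Fin γ → ZMod 2) × (Fin δ → ZMod 4) → ZMod 4 := fun _ => 0 with hf₂
      refine ⟨phiPlus ∘ f₁, phiPlus ∘ f₂, ⟨f₁, ?_, ?_, rfl⟩, ⟨f₂, ?_, ?_, rfl⟩, ?_, ?_⟩
      · intro u v
        simp only [hf₁, Prod.snd_add, Pi.add_apply, Prod.snd_zero, Pi.zero_apply]
        ring
      · simp [hf₁]
      · intro u v; simp [hf₂]
      · simp [hf₂]
      · intro h
        have := congrFun h ((0 : Fin γ → ZMod 2), Pi.single j₀ 1)
        simp only [Function.comp_apply, hf₁, hf₂, Pi.single_eq_same] at this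
        revert this; decide
      · refine (pair_sum _ _ ((0 : Fin γ → ZMod 2), Pi.single j₀ 1) ?_).symm
        intro v
        simp only [Function.comp_apply, hf₁, hf₂, Prod.snd_add, Pi.add_apply, Pi.single_eq_same]
        generalize v.2 j₀ = t
        revert t; decide
    · set i₀ : Fin γ := ⟨0, hγ⟩
      set f₁ : (Fin γ → ZMod 2) × (Fin δ → ZMod 4) → ZMod 4 := fun v => chi (v.1 i₀) with hf₁
      set f₂ : (Fin γ → ZMod 2) × (Fin δ → ZMod 4) → ZMod 4 := fun _ => 0 with hf₂
      have haff : IsAffine f₁ := by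
        intro u v
        have key : ∀ s t : ZMod 2, chi 0 - chi s - chi t + chi (s + t) = 0 := by decide
        simp only [hf₁, Prod.fst_add, Pi.add_apply, Prod.fst_zero, Pi.zero_apply]
        exact key _ _
      refine ⟨phiPlus ∘ f₁, phiPlus ∘ f₂, ⟨f₁, haff, ?_, rfl⟩, ⟨f₂, ?_, ?_, rfl⟩, ?_, ?_⟩
      · simp only [hf₁, Prod.fst_zero, Pi.zero_apply]
        simp [chi_zero]
      · intro u v; simp [hf₂]
      · simp [hf₂]
      · intro h
        have := congrFun h ((Pi.single i₀ 1 : Fin γ → ZMod 2), 0)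
        simp only [Function.comp_apply, hf₁, hf₂, Pi.single_eq_same] at this
        revert this; decide
      · refine (pair_sum _ _ ((Pi.single i₀ 1 : Fin γ → ZMod 2), 0) ?_).symm
        intro v
        simp only [Function.comp_apply, hf₁, hf₂, Prod.fst_add, Pi.add_apply, Pi.single_eq_same]
        generalize v.1 i₀ = t
        revert t; decide
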